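/- If G is a (P₃ ∪ P₂, diamond)-free graph with clique number ω = 2, then χ(G) ≤ 4. -/

import Mathlib

open SimpleGraph

/-- `H` occurs as an induced subgraph of `G`. -/
def IsInducedCopy {α β : Type*} (H : SimpleGraph α) (G : SimpleGraph β) : Prop :=
  ∃ f : α ↪ β, ∀ a b : α, G.Adj (f a) (f b) ↔ H.Adj a b

/-- `G` is `H`-free: no induced copy of `H`. -/
def Free {α β : Type*} (G : SimpleGraph α) (H : SimpleGraph β) : Prop :=
  ¬ IsInducedCopy H G

/-- `P₃ ∪ P₂`: disjoint union of a path on 3 vertices and an edge. -/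
def P3UP2 : SimpleGraph (Fin 5) :=
  SimpleGraph.fromRel (fun a b => (a, b) ∈ [((0 : Fin 5), (1 : Fin 5)), (1, 2), (3, 4)])

/-- The diamond: `K₄` minus an edge. -/
def diamondG : SimpleGraph (Fin 4) :=
  SimpleGraph.fromRel (fun a b =>
    (a, b) ∈ [((0 : Fin 4), (2 : Fin 4)), (0, 3), (1, 2), (1, 3), (2, 3)])

/-- `2K₂`: two disjoint edges. -/
def twoK2 : SimpleGraph (Fin 4) :=
  SimpleGraph.fromRel (fun a b => (a, b) ∈ [((0 : Fin 4), (1 : Fin 4)), (2, 3)])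

/-- `P₄ ∪ P₂`. -/
def P4UP2 : SimpleGraph (Fin 6) :=
  SimpleGraph.fromRel (fun a b =>
    (a, b) ∈ [((0 : Fin 6), (1 : Fin 6)), (1, 2), (2, 3), (4, 5)])

/-- The cycle on `n` vertices (for `n ≥ 3`), as a graph on `ZMod n`. -/
def cycG (n : ℕ) : SimpleGraph (ZMod n) :=
  SimpleGraph.fromRel (fun a b => b = a + 1)

/-- A graph is perfect if every induced subgraph has chromatic number
equal to its clique number. -/
def IsPerfect {V : Type*} (G : SimpleGraph V) : Prop :=
  ∀ s : Set V, (G.induce s).chromaticNumber = ((G.induce s).cliqueNum : ℕ∞)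

/-- The set `C_{ij}` attached to a maximum clique enumerated by `f : Fin ω ↪ V`:
vertices outside the clique, non-adjacent to both `f i` and `f j`, where `(i,j)`
is the lexicographically least such pair (this closed form is equivalent to the
iterative definition removing earlier `C`-sets). -/
def Cset {V : Type*} (G : SimpleGraph V) {ω : ℕ} (f : Fin ω ↪ V) (i j : Fin ω) : Set V :=
  {v | v ∉ Set.range f ∧ ¬ G.Adj v (f i) ∧ ¬ G.Adj v (f j) ∧
    ∀ p q : Fin ω, p < q → ¬ G.Adj v (f p) → ¬ G.Adj v (f q) →
      i < p ∨ (i = p ∧ j ≤ q)}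

/-- The set `I_a` attached to a maximum clique enumerated by `f : Fin ω ↪ V`:
vertices outside the clique adjacent to every clique vertex except `f k`. -/
def Iset {V : Type*} (G : SimpleGraph V) {ω : ℕ} (f : Fin ω ↪ V) (k : Fin ω) : Set V :=
  {v | v ∉ Set.range f ∧ ¬ G.Adj v (f k) ∧ ∀ l : Fin ω, l ≠ k → G.Adj v (f l)}


lemma my_tri_free {V : Type*} [Fintype V] (G : SimpleGraph V) (hω : G.cliqueNum = 2)
    {x y z : V} (hxy : G.Adj x y) (hyz : G.Adj y z) (hxz : G.Adj x z) : False := by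
  classical
  have hc : G.IsClique ({x, y, z} : Finset V) := by
    intro a ha b hb hab
    simp only [Finset.coe_insert, Set.mem_insert_iff, Finset.coe_singleton,
      Finset.mem_insert, Finset.mem_singleton, Finset.mem_coe] at ha hb
    rcases ha with rfl | rfl | rfl <;> rcases hb with rfl | rfl | rfl <;>
      first | exact absurd rfl hab | assumption | exact hxy.symm | exact hyz.symm | exact hxz.symm
  have hcard : ({x, y, z} : Finset V).card = 3 := by
    rw [Finset.card_insert_of_notMem, Finset.card_insert_of_notMem, Finset.card_singleton]
    · simp [hyz.ne]
    · simp [hxy.ne, hxz.ne]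
  have := hc.card_le_cliqueNum
  omega

theorem stmt11 {V : Type*} [Fintype V] (G : SimpleGraph V) (h1 : _root_.Free G P3UP2)
    (h2 : _root_.Free G diamondG) (hω : G.cliqueNum = 2) :
    G.chromaticNumber ≤ (4 : ℕ∞) := by
  classical
  have htri : ∀ x y z : V, G.Adj x y → G.Adj y z → G.Adj x z → False :=
    fun x y z h h' h'' => my_tri_free G hω h h' h''
  suffices hcol : G.Colorable 4 by
    exact_mod_cast hcol.chromaticNumber_le
  by_cases hP3 : ∃ a b c : V, G.Adj a b ∧ G.Adj b c ∧ ¬ G.Adj a c ∧ a ≠ c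
  · obtain ⟨a, b, c, hab, hbc, hac, hacne⟩ := hP3
    refine ⟨⟨fun v => if G.Adj v a then 0 else if G.Adj v b then 1 else if G.Adj v c then 2 else 3,
      ?_⟩⟩
    intro v w hvw heq
    by_cases hva : G.Adj v a
    · by_cases hwa : G.Adj w a
      · exact htri v w a hvw hwa hva
      · simp only [hva, hwa, if_true, if_false] at heq
        split_ifs at heq <;> exact absurd heq (by decide)
    · by_cases hwa : G.Adj w a
      · simp only [hva, hwa, if_true, if_false] at heq
        split_ifs at heq <;> exact absurd heq (by decide)
      · simp only [hva, hwa, if_false] at heq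
        by_cases hvb : G.Adj v b
        · by_cases hwb : G.Adj w b
          · exact htri v w b hvw hwb hvb
          · simp only [hvb, hwb, if_true, if_false] at heq
            split_ifs at heq <;> exact absurd heq (by decide)
        · by_cases hwb : G.Adj w b
          · simp only [hvb, hwb, if_true, if_false] at heq
            split_ifs at heq <;> exact absurd heq (by decide)
          · simp only [hvb, hwb, if_false] at heq
            by_cases hvc : G.Adj v c
            · by_cases hwc : G.Adj w c
              · exact htri v w c hvw hwc hvc
              · simp only [hvc, hwc, if_true, if_false] at heq
                exact absurd heq (by decide)
            · by_cases hwc : G.Adj w c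
              · simp only [hvc, hwc, if_true, if_false] at heq
                exact absurd heq (by decide)
              · -- all nonadjacent: induced P3 ∪ P2
                have hvna : v ≠ a := fun h => hvb (h ▸ hab)
                have hvnb : v ≠ b := fun h => hva (h ▸ hab.symm)
                have hvnc : v ≠ c := fun h => hvb (h ▸ hbc.symm)
                have hwna : w ≠ a := fun h => hwb (h ▸ hab)
                have hwnb : w ≠ b := fun h => hwa (h ▸ hab.symm)
                have hwnc : w ≠ c := fun h => hwb (h ▸ hbc.symm)
                have hinj : Function.Injective (![a, b, c, v, w] : Fin 5 → V) := by
                  intro i j hij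
                  fin_cases i <;> fin_cases j <;>
                    simp_all [hab.ne, hbc.ne, hvw.ne, Matrix.cons_val_zero, Matrix.cons_val_one] <;>
                    first
                      | rfl
                      | (exact absurd hij.symm hacne) | (exact absurd hij hacne)
                      | (exact absurd hij.symm hvna) | (exact absurd hij hvna)
                      | (exact absurd hij.symm hvnb) | (exact absurd hij hvnb)
                      | (exact absurd hij.symm hvnc) | (exact absurd hij hvnc)
                      | (exact absurd hij.symm hwna) | (exact absurd hij hwna)
                      | (exact absurd hij.symm hwnb) | (exact absurd hij hwnb)
                      | (exact absurd hij.symm hwnc) | (exact absurd hij hwnc)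
                refine h1 ⟨⟨![a, b, c, v, w], hinj⟩, ?_⟩
                intro i j
                have hsym : ∀ x y : V, ¬ G.Adj x y → ¬ G.Adj y x := fun x y h h' => h h'.symm
                fin_cases i <;> fin_cases j <;>
                  simp [P3UP2, SimpleGraph.fromRel_adj, hab, hbc, hvw, hac, hva, hvb, hvc,
                    hwa, hwb, hwc, hab.symm, hbc.symm, hvw.symm,
                    hsym a c hac, hsym v a hva, hsym v b hvb, hsym v c hvc,
                    hsym w a hwa, hsym w b hwb, hsym w c hwc, G.irrefl] <;>
                  decide
  · -- no induced P3: every vertex has at most one neighbor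
    push_neg at hP3
    have huniq : ∀ v w x : V, G.Adj v w → G.Adj v x → w = x := by
      intro v w x hvw hvx
      by_cases h : G.Adj w x
      · exact absurd (htri w v x hvw.symm hvx h) id
      · exact (hP3 w v x hvw.symm hvx h).symm ▸ rfl
    have hemb := Fintype.equivFin V
    suffices h2col : G.Colorable 2 by exact h2col.mono (by norm_num)
    refine ⟨⟨fun v => if ∃ w, G.Adj v w ∧ hemb w < hemb v then 0 else 1, ?_⟩⟩
    intro v w hvw heq
    by_cases h1' : ∃ x, G.Adj v x ∧ hemb x < hemb v
    · by_cases h2' : ∃ x, G.Adj w x ∧ hemb x < hemb w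
      · obtain ⟨x, hx, hlt⟩ := h1'
        obtain ⟨y, hy, hlt'⟩ := h2'
        have : x = w := huniq v x w hx hvw
        have : y = v := huniq w y v hy hvw.symm
        subst_vars
        exact absurd (hlt.trans hlt') (lt_irrefl _)
      · simp [h1', h2'] at heq
    · by_cases h2' : ∃ x, G.Adj w x ∧ hemb x < hemb w
      · simp [h1', h2'] at heq
      · -- neither has smaller neighbor, but one of v,w is smaller
        have hne : hemb v ≠ hemb w := fun h => hvw.ne (hemb.injective h)
        rcases lt_or_gt_of_ne hne with h | h
        · exact h2' ⟨v, hvw.symm, h⟩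
        · exact h1' ⟨w, hvw, h⟩
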